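/- Let l: S → ℕ be codeword lengths on a finite alphabet S satisfying the Kraft inequality Σ_{s∈S} 2^{−l(s)} ≤ 1. Then there exists a prefix-free binary code c: S → {0,1}* with |c(s)| = l(s) for all s. -/

import Mathlib

/-- MSB-first binary word of length `m` for the number `k`. -/
private def kraftWord (m k : ℕ) : List Bool :=
  (List.range m).map (fun t => k.testBit (m - 1 - t))

private lemma kraftWord_length (m k : ℕ) : (kraftWord m k).length = m := by
  simp [kraftWord]

private lemma kraftWord_getElem (m k t : ℕ) (ht : t < m) :
    (kraftWord m k)[t]'(by simpa [kraftWord_length] using ht) = k.testBit (m - 1 - t) := by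
  simp [kraftWord]

private lemma kraftWord_prefix {m m' k k' : ℕ} (hm : m ≤ m')
    (hk : k < 2 ^ m) (hk' : k' < 2 ^ m')
    (h : kraftWord m k <+: kraftWord m' k') : k = k' / 2 ^ (m' - m) := by
  rw [← Nat.shiftRight_eq_div_pow]
  apply Nat.eq_of_testBit_eq
  intro p
  rw [Nat.testBit_shiftRight]
  by_cases hp : p < m
  · have ht : m - 1 - (m - 1 - p) = p := by omega
    have h1 := h.getElem (i := m - 1 - p)
      (by rw [kraftWord_length]; omega)
    rw [kraftWord_getElem _ _ _ (by omega), kraftWord_getElem _ _ _ (by omega)] at h1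
    rw [ht] at h1
    have ht' : m' - 1 - (m - 1 - p) = m' - m + p := by omega
    rw [ht'] at h1
    exact h1
  · rw [Nat.testBit_eq_false_of_lt, Nat.testBit_eq_false_of_lt]
    · exact lt_of_lt_of_le hk' (Nat.pow_le_pow_right (by norm_num) (by omega))
    · exact lt_of_lt_of_le hk (Nat.pow_le_pow_right (by norm_num) (by omega))

/-- Converse of Kraft's inequality: lengths satisfying the Kraft inequality are
achieved by some prefix-free binary code. -/
theorem stmt8 {S : Type*} [Fintype S] (l : S → ℕ)
    (hK : ∑ s : S, (2 : ℝ) ^ (-(l s : ℤ)) ≤ 1) :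
    ∃ c : S → List Bool, (∀ s, (c s).length = l s) ∧
      ∀ s t : S, s ≠ t → ¬ (c s <+: c t) := by
  classical
  set n := Fintype.card S with hn
  let e0 : Fin n ≃ S := (Fintype.equivFin S).symm
  let σ := Tuple.sort (l ∘ e0)
  let e : Fin n ≃ S := σ.trans e0
  let L : Fin n → ℕ := fun i => l (e i)
  have hL : Monotone L := Tuple.monotone_sort (l ∘ e0)
  let N : Fin n → ℕ := fun i => ∑ j ∈ Finset.Iio i, 2 ^ (L i - L j)
  -- Kraft inequality transported to `Fin n`
  have hK' : ∑ i : Fin n, (2 : ℝ) ^ (-(L i : ℤ)) ≤ 1 := by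
    calc ∑ i : Fin n, (2 : ℝ) ^ (-(L i : ℤ))
        = ∑ s : S, (2 : ℝ) ^ (-(l s : ℤ)) :=
          Fintype.sum_equiv e _ _ (fun i => rfl)
      _ ≤ 1 := hK
  -- N i as a real number
  have hNcast : ∀ i : Fin n, (N i : ℝ) = 2 ^ (L i : ℤ) * ∑ j ∈ Finset.Iio i, (2 : ℝ) ^ (-(L j : ℤ)) := by
    intro i
    rw [Finset.mul_sum]
    push_cast [N]
    apply Finset.sum_congr rfl
    intro j hj
    have hji : L j ≤ L i := hL (le_of_lt (Finset.mem_Iio.mp hj))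
    rw [← zpow_natCast (2 : ℝ), ← zpow_add₀ (by norm_num : (2:ℝ) ≠ 0)]
    congr 1
    omega
  have hNlt : ∀ i : Fin n, N i < 2 ^ L i := by
    intro i
    have hsub : ∑ j ∈ Finset.Iio i, (2 : ℝ) ^ (-(L j : ℤ)) + (2:ℝ) ^ (-(L i : ℤ)) ≤ 1 := by
      have : ∑ j ∈ insert i (Finset.Iio i), (2 : ℝ) ^ (-(L j : ℤ)) ≤
          ∑ j : Fin n, (2 : ℝ) ^ (-(L j : ℤ)) := by
        apply Finset.sum_le_sum_of_subset_of_nonneg (Finset.subset_univ _)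
        intro j _ _
        positivity
      rw [Finset.sum_insert (by simp)] at this
      linarith [hK']
    have h2 : (N i : ℝ) ≤ 2 ^ (L i : ℤ) * (1 - (2:ℝ) ^ (-(L i : ℤ))) := by
      rw [hNcast i]
      apply mul_le_mul_of_nonneg_left (by linarith) (by positivity)
    have h3 : (2:ℝ) ^ (L i : ℤ) * (2:ℝ) ^ (-(L i : ℤ)) = 1 := by
      rw [← zpow_add₀ (by norm_num : (2:ℝ) ≠ 0)]; simp
    have h4 : (N i : ℝ) < 2 ^ (L i : ℤ) := by nlinarith [h2, h3]
    have : (N i : ℝ) < ((2 ^ L i : ℕ) : ℝ) := by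
      push_cast
      rw [← zpow_natCast (2 : ℝ)]
      exact h4
    exact_mod_cast this
  -- the key counting step
  have hstep : ∀ i j : Fin n, i < j → 2 ^ (L j - L i) * (N i + 1) ≤ N j := by
    intro i j hij
    have hLij : L i ≤ L j := hL (le_of_lt hij)
    have hsubset : insert i (Finset.Iio i) ⊆ Finset.Iio j := by
      intro k hk
      simp only [Finset.mem_insert, Finset.mem_Iio] at hk ⊢
      rcases hk with rfl | hk
      · exact hij
      · exact lt_trans hk hij
    calc 2 ^ (L j - L i) * (N i + 1)
        = ∑ k ∈ insert i (Finset.Iio i), 2 ^ (L j - L k) := by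
          rw [Finset.sum_insert (by simp), mul_add, mul_one, Finset.mul_sum]
          rw [add_comm]
          congr 1
          apply Finset.sum_congr rfl
          intro k hk
          have hki : L k ≤ L i := hL (le_of_lt (Finset.mem_Iio.mp hk))
          rw [← pow_add]
          congr 1
          omega
      _ ≤ N j := Finset.sum_le_sum_of_subset hsubset
  -- the code
  refine ⟨fun s => kraftWord (L (e.symm s)) (N (e.symm s)), ?_, ?_⟩
  · intro s
    rw [kraftWord_length]
    show l (e (e.symm s)) = l s
    rw [Equiv.apply_symm_apply]
  · intro s t hst hpre
    set i := e.symm s with hi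
    set j := e.symm t with hj
    have hij : i ≠ j := fun h => hst (by rw [← Equiv.apply_symm_apply e s, ← Equiv.apply_symm_apply e t, ← hi, ← hj, h])
    have hlen : L i ≤ L j := by
      have := hpre.length_le
      simpa [kraftWord_length] using this
    have heq : N i = N j / 2 ^ (L j - L i) :=
      kraftWord_prefix hlen (hNlt i) (hNlt j) hpre
    rcases lt_or_gt_of_ne hij with h | h
    · have h1 := hstep i j h
      have h2 : N i + 1 ≤ N j / 2 ^ (L j - L i) :=
        (Nat.le_div_iff_mul_le (Nat.two_pow_pos _)).mpr
          (by linarith [h1])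
      omega
    · have hLji : L j ≤ L i := hL (le_of_lt h)
      have hLeq : L i = L j := le_antisymm hlen hLji
      have h1 := hstep j i h
      simp only [hLeq, Nat.sub_self, pow_zero, one_mul, Nat.div_one] at h1 heq
      omega
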